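/- Let B be a commutative integral domain and G a group acting on B by ring automorphisms; extend the action to the fraction field Frac(B). Assume every G-invariant element of Frac(B) lies in B, and set K := (Frac B)^G, a subfield of B. Let D be a finite free B-module of rank r equipped with an action of G by additive automorphisms that is semilinear over the action on B, i.e. g·(b·d) = (g·b)·(g·d). Then the canonical map B ⊗_K D^G → D is injective; in particular dim_K D^G ≤ r. -/

import Mathlib

open scoped TensorProduct

/-- The fixed subring `B^G` of a ring with a group action by ring automorphisms. -/
def fixedSubring (G : Type*) [Group G] (B : Type*) [CommRing B] [MulSemiringAction G B] :
    Subring B where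
  carrier := {b : B | ∀ g : G, g • b = b}
  zero_mem' := fun g => smul_zero g
  one_mem' := fun g => smul_one g
  add_mem' := fun {a b} ha hb g => by rw [smul_add, ha g, hb g]
  mul_mem' := fun {a b} ha hb g => by rw [smul_mul', ha g, hb g]
  neg_mem' := fun {a} ha g => by rw [smul_neg, ha g]

variable (B : Type*) [CommRing B] (G : Type*) [Group G] [MulSemiringAction G B]
variable (D : Type*) [AddCommGroup D] [Module B D] [DistribMulAction G D]

/-- The fixed points `D^G`, as a module over the fixed subring `B^G`; this requires the
`G`-action on `D` to be semilinear over the `G`-action on `B`. -/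
def fixedPointsSubmodule
    (hsemi : ∀ (g : G) (b : B) (d : D), g • (b • d) = (g • b) • (g • d)) :
    Submodule (fixedSubring G B) D where
  carrier := {d : D | ∀ g : G, g • d = d}
  add_mem' := fun {a b} ha hb g => by rw [smul_add, ha g, hb g]
  zero_mem' := fun g => smul_zero g
  smul_mem' := fun c d hd g => by
    show g • ((c : B) • d) = (c : B) • d
    rw [hsemi g (c : B) d, hd g, c.2 g]

theorem invariant_ratio (B : Type*) [CommRing B] [IsDomain B] (G : Type*) [Group G]
    [MulSemiringAction G B] [MulSemiringAction G (FractionRing B)]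
    (hcompat : ∀ (g : G) (b : B),
      g • (algebraMap B (FractionRing B) b) = algebraMap B (FractionRing B) (g • b))
    (hinv : ∀ x : FractionRing B, (∀ g : G, g • x = x) →
      ∃ b : B, algebraMap B (FractionRing B) b = x)
    (b₁ b₂ : B) (hb₁ : b₁ ≠ 0)
    (h : ∀ g : G, b₁ * (g • b₂) = (g • b₁) * b₂) :
    ∃ c : B, (∀ g : G, g • c = c) ∧ c * b₁ = b₂ := by
  set φ := algebraMap B (FractionRing B) with hφdef
  have hφ : Function.Injective φ := IsFractionRing.injective B (FractionRing B)
  have hφ1 : φ b₁ ≠ 0 := fun h0 => hb₁ (hφ (by simpa using h0))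
  have hg1 : ∀ g : G, φ (g • b₁) ≠ 0 := by
    intro g h0
    have h1 : g • b₁ = 0 := hφ (by simpa using h0)
    apply hb₁
    have h2 := congrArg (fun x => g⁻¹ • x) h1
    simpa using h2
  have hx : ∀ g : G, g • (φ b₂ / φ b₁) = φ b₂ / φ b₁ := by
    intro g
    rw [div_eq_mul_inv, smul_mul', smul_inv'', hcompat, hcompat, ← div_eq_mul_inv (φ (g • b₂)) (φ (g • b₁)), ← div_eq_mul_inv (φ b₂) (φ b₁),
      div_eq_div_iff (hg1 g) hφ1, ← map_mul, ← map_mul]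
    exact congrArg φ (by rw [mul_comm (g • b₂) b₁, h g, mul_comm])
  obtain ⟨c, hc⟩ := hinv _ hx
  refine ⟨c, fun g => hφ ?_, hφ ?_⟩
  · rw [← hcompat, hc]; exact hx g
  · rw [map_mul, hc, div_mul_cancel₀ _ hφ1]

theorem fixedSubring_isField (B : Type*) [CommRing B] [IsDomain B] (G : Type*) [Group G]
    [MulSemiringAction G B] [MulSemiringAction G (FractionRing B)]
    (hcompat : ∀ (g : G) (b : B),
      g • (algebraMap B (FractionRing B) b) = algebraMap B (FractionRing B) (g • b))
    (hinv : ∀ x : FractionRing B, (∀ g : G, g • x = x) →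
      ∃ b : B, algebraMap B (FractionRing B) b = x) :
    IsField (fixedSubring G B) := by
  refine ⟨⟨0, 1, fun h => zero_ne_one (congrArg Subtype.val h)⟩, mul_comm, ?_⟩
  rintro ⟨b, hbfix⟩ hb0
  have hb : b ≠ 0 := fun h => hb0 (Subtype.ext h)
  obtain ⟨c, hcfix, hcb⟩ := invariant_ratio B G hcompat hinv b 1 hb
    (fun g => by simp [hbfix g])
  exact ⟨⟨c, hcfix⟩, Subtype.ext (by show b * c = 1; rw [mul_comm]; exact hcb)⟩

set_option synthInstance.maxHeartbeats 400000 in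
theorem key_lindep (B : Type*) [CommRing B] [IsDomain B] (G : Type*) [Group G]
    [MulSemiringAction G B] [MulSemiringAction G (FractionRing B)]
    (hcompat : ∀ (g : G) (b : B),
      g • (algebraMap B (FractionRing B) b) = algebraMap B (FractionRing B) (g • b))
    (hinv : ∀ x : FractionRing B, (∀ g : G, g • x = x) →
      ∃ b : B, algebraMap B (FractionRing B) b = x)
    (D : Type*) [AddCommGroup D] [Module B D] [DistribMulAction G D]
    [NoZeroSMulDivisors B D]
    (hsemi : ∀ (g : G) (b : B) (d : D), g • (b • d) = (g • b) • (g • d))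
    {ι : Type*} (v : ι → fixedPointsSubmodule B G D hsemi)
    (hv : LinearIndependent (fixedSubring G B) v) :
    LinearIndependent B (fun i => (v i : D)) := by
  classical
  set w : ι → D := fun i => (v i : D) with hw
  rw [linearIndependent_iff]
  suffices H : ∀ n (l : ι →₀ B), l.support.card = n →
      Finsupp.linearCombination B w l = 0 → l = 0 by
    intro l hl; exact H l.support.card l rfl hl
  intro n
  induction n using Nat.strong_induction_on with
  | _ n IH =>
  intro l hcard hl
  by_cases hl0 : l = 0
  · exact hl0
  exfalso
  obtain ⟨i₀, hi₀⟩ := Finsupp.support_nonempty_iff.mpr hl0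
  set b₁ := l i₀ with hb₁def
  have hb₁ : b₁ ≠ 0 := Finsupp.mem_support_iff.mp hi₀
  -- the relation obtained by applying g
  have hglc : ∀ g : G, Finsupp.linearCombination B w (l.mapRange (fun b => g • b)
      (smul_zero g)) = 0 := by
    intro g
    rw [Finsupp.linearCombination_apply,
      Finsupp.sum_mapRange_index (fun i => by rw [zero_smul])]
    have : (l.sum fun i c => (g • c) • w i) = g • (l.sum fun i c => c • w i) := by
      rw [Finsupp.sum, Finsupp.sum, Finset.smul_sum]
      refine Finset.sum_congr rfl fun j _ => ?_
      rw [hsemi g (l j) (w j), (v j).2 g]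
    rw [this, ← Finsupp.linearCombination_apply, hl, smul_zero]
  have hrel : ∀ (j : ι) (g : G), b₁ * (g • l j) = (g • b₁) * l j := by
    intro j g
    set l' : ι →₀ B :=
      b₁ • (l.mapRange (fun b => g • b) (smul_zero g)) - (g • b₁) • l with hl'def
    have hl'supp : l'.support ⊆ l.support.erase i₀ := by
      intro x hx
      rw [Finset.mem_erase]
      rw [Finsupp.mem_support_iff] at hx
      constructor
      · rintro rfl
        apply hx
        simp only [hl'def, Finsupp.sub_apply, Finsupp.smul_apply, Finsupp.mapRange_apply,
          smul_eq_mul, ← hb₁def]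
        ring_nf
      · rw [Finsupp.mem_support_iff]
        intro hx0
        apply hx
        simp [hl'def, hx0]
    have hl'zero : l' = 0 := by
      refine IH l'.support.card ?_ l' rfl ?_
      · calc l'.support.card ≤ (l.support.erase i₀).card := Finset.card_le_card hl'supp
          _ < l.support.card := Finset.card_erase_lt_of_mem hi₀
          _ = n := hcard
      · rw [hl'def, map_sub, map_smul, map_smul, hglc, hl, smul_zero, smul_zero, sub_zero]
    have := congrArg (fun f : ι →₀ B => f j) hl'zero
    simp only [hl'def, Finsupp.sub_apply, Finsupp.smul_apply, Finsupp.mapRange_apply,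
      smul_eq_mul, Finsupp.coe_zero, Pi.zero_apply] at this
    exact sub_eq_zero.mp this
  have hchoice : ∀ j : ι, ∃ c : B, (∀ g : G, g • c = c) ∧ c * b₁ = l j :=
    fun j => invariant_ratio B G hcompat hinv b₁ (l j) hb₁ (hrel j)
  choose c hcfix hcb using hchoice
  have hsum : ∑ j ∈ l.support, ((⟨c j, hcfix j⟩ : fixedSubring G B) • v j) = 0 := by
    have hcoe : ((∑ j ∈ l.support, ((⟨c j, hcfix j⟩ : fixedSubring G B) • v j) :
        fixedPointsSubmodule B G D hsemi) : D) = ∑ j ∈ l.support, (c j) • w j := by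
      push_cast
      rfl
    have hzero : ∑ j ∈ l.support, (c j) • w j = 0 := by
      have hb : b₁ • ∑ j ∈ l.support, (c j) • w j = 0 := by
        rw [Finset.smul_sum]
        have : ∀ j ∈ l.support, b₁ • (c j) • w j = l j • w j := by
          intro j _
          rw [smul_smul, mul_comm, hcb j]
        rw [Finset.sum_congr rfl this]
        rw [Finsupp.linearCombination_apply, Finsupp.sum] at hl
        exact hl
      rcases smul_eq_zero.mp hb with h | h
      · exact absurd h hb₁
      · exact h
    apply Subtype.ext
    rw [hcoe, hzero]
    simp
  have := linearIndependent_iff'.mp hv l.support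
    (fun j => (⟨c j, hcfix j⟩ : fixedSubring G B)) hsum i₀ hi₀
  have hc0 : c i₀ = 0 := congrArg Subtype.val this
  apply hb₁
  rw [hb₁def, ← hcb i₀, hc0, zero_mul]

theorem inj_helper (K : Type*) [Field K] (Bb : Type*) [CommRing Bb] [Module K Bb]
    (V : Type*) [AddCommGroup V] [Module K V]
    (D : Type*) [AddCommGroup D] [Module Bb D] [Module K D]
    (w : V → D)
    (f : Bb ⊗[K] V →ₗ[K] D)
    (hf : ∀ (b : Bb) (v : V), f (b ⊗ₜ[K] v) = b • w v)
    (hind : ∀ s : Set V, LinearIndependent K ((↑) : s → V) →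
      LinearIndependent Bb (fun x : s => w x)) :
    Function.Injective f := by
  classical
  set bas := Module.Basis.ofVectorSpace K V with hbas
  have hB : LinearIndependent Bb (fun i : Module.Basis.ofVectorSpaceIndex K V => w (bas i)) := by
    have h := hind (Module.Basis.ofVectorSpaceIndex K V)
      (by
        have hco : (((↑) : Module.Basis.ofVectorSpaceIndex K V → V)) = ⇑bas := by
          funext i; rw [Module.Basis.ofVectorSpace_apply_self]
        rw [hco]; exact bas.linearIndependent)
    have : (fun i : Module.Basis.ofVectorSpaceIndex K V => w (bas i)) =
        (fun x : Module.Basis.ofVectorSpaceIndex K V => w x) := by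
      funext i; rw [Module.Basis.ofVectorSpace_apply_self]
    rw [this]; exact h
  let e : (Bb ⊗[K] V) ≃ₗ[K] (Module.Basis.ofVectorSpaceIndex K V →₀ Bb) :=
    (TensorProduct.congr (LinearEquiv.refl K Bb) bas.repr).trans
      (TensorProduct.finsuppScalarRight K K Bb (Module.Basis.ofVectorSpaceIndex K V))
  have hfe : ∀ l : Module.Basis.ofVectorSpaceIndex K V →₀ Bb,
      f (e.symm l) = Finsupp.linearCombination Bb (fun i => w (bas i)) l := by
    intro l
    induction l using Finsupp.induction_linear with
    | zero => simp
    | add l₁ l₂ h₁ h₂ => rw [map_add, map_add, h₁, h₂, map_add]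
    | single i c =>
      have he : e.symm (Finsupp.single i c) = c ⊗ₜ[K] (bas i) := by
        show (TensorProduct.congr (LinearEquiv.refl K Bb) bas.repr).symm
          ((TensorProduct.finsuppScalarRight K K Bb _).symm (Finsupp.single i c)) = _
        rw [TensorProduct.finsuppScalarRight_symm_apply_single,
          TensorProduct.congr_symm_tmul]
        simp [Module.Basis.repr_symm_single_one]
      rw [he, Finsupp.linearCombination_single, hf]
  rw [← LinearMap.ker_eq_bot, LinearMap.ker_eq_bot']
  intro x hx
  have hx' : f (e.symm (e x)) = 0 := by rw [e.symm_apply_apply]; exact hx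
  rw [hfe] at hx'
  have h0 : e x = 0 := linearIndependent_iff.mp hB _ hx'
  have h1 := congrArg e.symm h0
  rwa [e.symm_apply_apply, map_zero] at h1

/-- The canonical map `B ⊗_{B^G} D^G → D`, `b ⊗ d ↦ b • d`. -/
noncomputable def canonicalTensorMap
    (hsemi : ∀ (g : G) (b : B) (d : D), g • (b • d) = (g • b) • (g • d)) :
    B ⊗[fixedSubring G B] (fixedPointsSubmodule B G D hsemi) →ₗ[fixedSubring G B] D :=
  TensorProduct.lift
    { toFun := fun b =>
        { toFun := fun d => b • (d : D)
          map_add' := fun d d' => by simp [smul_add]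
          map_smul' := fun c d => by
            show b • ((c : B) • (d : D)) = (c : B) • (b • (d : D))
            rw [smul_comm] }
      map_add' := fun b b' => by
        ext d; show (b + b') • (d : D) = b • (d : D) + b' • (d : D); rw [add_smul]
      map_smul' := fun c b => by
        ext d
        show ((c : B) * b) • (d : D) = (c : B) • (b • (d : D))
        rw [mul_smul] }

set_option synthInstance.maxHeartbeats 400000 in
set_option maxHeartbeats 1000000 in
/-- Content of **Lemma 6.3**: let `B` be a commutative integral domain with a group `G` acting
by ring automorphisms, the action being extended to `Frac(B)`.  Assume every `G`-invariant
element of `Frac(B)` lies in `B`, and let `K := (Frac B)^G`, realized as the fixed subring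
`B^G` of `B` (a subfield of `B` under this assumption).  Let `D` be a finite free `B`-module of
rank `r` with a semilinear `G`-action.  Then the canonical map `B ⊗_K D^G → D` is injective;
in particular `dim_K D^G ≤ r`. -/
theorem canonicalTensorMap_injective_of_invariants_mem
    (B : Type*) [CommRing B] [IsDomain B] (G : Type*) [Group G] [MulSemiringAction G B]
    [MulSemiringAction G (FractionRing B)]
    (hcompat : ∀ (g : G) (b : B),
      g • (algebraMap B (FractionRing B) b) = algebraMap B (FractionRing B) (g • b))
    (hinv : ∀ x : FractionRing B, (∀ g : G, g • x = x) →
      ∃ b : B, algebraMap B (FractionRing B) b = x)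
    (D : Type*) [AddCommGroup D] [Module B D] [DistribMulAction G D]
    [Module.Free B D] (r : ℕ) (hrank : Module.rank B D = r)
    (hsemi : ∀ (g : G) (b : B) (d : D), g • (b • d) = (g • b) • (g • d)) :
    Function.Injective (canonicalTensorMap B G D hsemi) ∧
      Module.rank (fixedSubring G B) (fixedPointsSubmodule B G D hsemi) ≤ r := by
  classical
  have hfield := fixedSubring_isField B G hcompat hinv
  haveI : NoZeroSMulDivisors B D :=
    noZeroSMulDivisors_iff_right_eq_zero_of_smul.mpr fun r hr m h =>
      Module.IsTorsionFree.isSMulRegular (R := B) (M := D) (isRegular_of_ne_zero hr) (by simp only; rw [h, smul_zero])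
  constructor
  · exact @inj_helper (fixedSubring G B) hfield.toField B _
      (inferInstanceAs (Module (fixedSubring G B) B))
      (fixedPointsSubmodule B G D hsemi) _
      (inferInstanceAs (Module (fixedSubring G B) (fixedPointsSubmodule B G D hsemi)))
      D _ _ (inferInstanceAs (Module (fixedSubring G B) D))
      (fun m => (m : D)) (canonicalTensorMap B G D hsemi)
      (fun b v => rfl)
      (fun s hs => key_lindep B G hcompat hinv D hsemi (fun x : s => (x : _)) (by with_reducible_and_instances exact hs))
  · rw [Module.rank_def]
    haveI : Nonempty {s : Set (fixedPointsSubmodule B G D hsemi) //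
        LinearIndependent (fixedSubring G B) ((↑) : s → fixedPointsSubmodule B G D hsemi)} :=
      ⟨⟨∅, linearIndependent_empty _ _⟩⟩
    refine ciSup_le ?_
    rintro ⟨s, hs⟩
    have hind := key_lindep B G hcompat hinv D hsemi (fun x : s => (x : _)) hs
    have h2 := hind.cardinal_le_rank
    rw [hrank] at h2
    exact h2
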